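/- Let A be a positive definite invertible matrix and v a nonzero vector. Then ⟨v, A⁻¹v⟩⁻¹ = max { λ > 0 : A − λ vv* ≥ 0 }, i.e. the largest λ such that A − λvv* is positive semidefinite equals the reciprocal of ⟨A⁻¹v, v⟩. -/

import Mathlib

open Matrix
open scoped ComplexOrder

private lemma vecMulVec_mulVec' {n : Type*} [Fintype n] (v w x : n → ℂ) :
    Matrix.vecMulVec v w *ᵥ x = (w ⬝ᵥ x) • v := by
  funext i
  simp only [Matrix.mulVec, Matrix.vecMulVec_apply, dotProduct, Pi.smul_apply, smul_eq_mul,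
    Finset.sum_mul]
  exact Finset.sum_congr rfl fun j _ => by ring

private lemma quad_eq {n : Type*} [Fintype n] (A : Matrix n n ℂ) (t : ℂ) (v x : n → ℂ) :
    star x ⬝ᵥ ((A - t • Matrix.vecMulVec v (star v)) *ᵥ x)
      = star x ⬝ᵥ (A *ᵥ x) - t * ((star v ⬝ᵥ x) * (star x ⬝ᵥ v)) := by
  rw [Matrix.sub_mulVec, dotProduct_sub, Matrix.smul_mulVec, dotProduct_smul,
    vecMulVec_mulVec', dotProduct_smul]
  simp only [smul_eq_mul]

private lemma herm_part {n : Type*} [Fintype n] (r : ℝ) (v : n → ℂ) :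
    ((r : ℂ) • Matrix.vecMulVec v (star v)).IsHermitian := by
  ext i j
  simp only [Matrix.conjTranspose_apply, Matrix.smul_apply, Matrix.vecMulVec_apply,
    Pi.star_apply, star_mul', smul_eq_mul, star_star, Complex.star_def,
    Complex.conj_ofReal, _root_.map_mul, Complex.conj_conj]
  ring

/-- for a positive definite (invertible) matrix `A` and a nonzero vector `v`,
`⟨v, A⁻¹v⟩⁻¹ = max { λ > 0 : A − λ vv* ≥ 0 }`. -/
theorem max_lambda_rank_one {n : Type*} [Fintype n] [DecidableEq n]
    (A : Matrix n n ℂ) (hA : A.PosDef) (v : n → ℂ) (hv : v ≠ 0) :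
    ∃ r : ℝ, (r : ℂ) = (star v ⬝ᵥ (A⁻¹ *ᵥ v))⁻¹ ∧
      IsGreatest {lam : ℝ | 0 < lam ∧
        (A - (lam : ℂ) • Matrix.vecMulVec v (star v)).PosSemidef} r := by
  have hAinv : (A⁻¹).PosDef := hA.inv
  set u : n → ℂ := A⁻¹ *ᵥ v with hu_def
  set c : ℂ := star v ⬝ᵥ u with hc_def
  have hc : 0 < c := hAinv.dotProduct_mulVec_pos hv
  have hcre : 0 < c.re := (Complex.lt_def.mp hc).1
  have hcim : c.im = 0 := ((Complex.lt_def.mp hc).2).symm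
  have hcr : (c.re : ℂ) = c := Complex.ext (by simp) (by simp [hcim])
  have hcne : c ≠ 0 := ne_of_gt hc
  have hstarc : star c = c := by
    rw [← hcr, Complex.star_def, Complex.conj_ofReal]
  have hAu : A *ᵥ u = v := by
    rw [hu_def, Matrix.mulVec_mulVec, Matrix.mul_nonsing_inv _
      ((Matrix.isUnit_iff_isUnit_det _).1 hA.isUnit), Matrix.one_mulVec]
  have huv : star u ⬝ᵥ v = c := by
    rw [← hstarc, hc_def, star_dotProduct]
  have huAx : ∀ x : n → ℂ, star u ⬝ᵥ (A *ᵥ x) = star v ⬝ᵥ x := by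
    intro x
    rw [dotProduct_mulVec]
    congr 1
    have h5 : star v = star u ᵥ* A := by
      conv_lhs => rw [← hAu, ← hA.1, Matrix.star_mulVec, Matrix.conjTranspose_conjTranspose]
    exact h5.symm
  refine ⟨(c.re)⁻¹, ?_, ⟨?_, Matrix.PosSemidef.of_dotProduct_mulVec_nonneg ?_ ?_⟩, ?_⟩
  · push_cast
    rw [hcr]
  · positivity
  · -- Hermitian
    exact hA.1.sub (herm_part _ v)
  · -- PSD inequality
    intro x
    rw [quad_eq]
    set s : ℂ := star v ⬝ᵥ x with hs_def
    have hxv : star x ⬝ᵥ v = star s := by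
      rw [hs_def, star_dotProduct]
    set y : n → ℂ := x - (s / c) • u with hy_def
    have h0 : 0 ≤ star y ⬝ᵥ (A *ᵥ y) := hA.posSemidef.dotProduct_mulVec_nonneg y
    have hsy : star y = star x - (star s / c) • star u := by
      rw [hy_def]
      funext i
      simp [Pi.star_apply, star_sub, star_smul, hstarc, div_eq_mul_inv, star_mul', star_inv₀]
    have hAy : A *ᵥ y = A *ᵥ x - (s / c) • v := by
      rw [hy_def, Matrix.mulVec_sub, Matrix.mulVec_smul, hAu]
    have expand : star y ⬝ᵥ (A *ᵥ y)
        = star x ⬝ᵥ (A *ᵥ x) - c⁻¹ * (s * star s) := by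
      rw [hsy, hAy, sub_dotProduct, dotProduct_sub, dotProduct_sub, smul_dotProduct,
        smul_dotProduct, dotProduct_smul, dotProduct_smul, huAx, huv, hxv, ← hs_def]
      simp only [smul_eq_mul]
      field_simp
      ring
    rw [expand] at h0
    calc (0:ℂ) ≤ star x ⬝ᵥ (A *ᵥ x) - c⁻¹ * (s * star s) := h0
      _ = star x ⬝ᵥ (A *ᵥ x) - ((c.re⁻¹ : ℝ) : ℂ) * (s * (star x ⬝ᵥ v)) := by
          rw [Complex.ofReal_inv, hxv, hcr]
  · -- maximality
    rintro lam ⟨hlam_pos, hlam_psd⟩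
    have h1 := hlam_psd.dotProduct_mulVec_nonneg u
    rw [quad_eq, hAu, huv, ← hc_def] at h1
    have h2 : (0:ℂ) ≤ ((c.re - lam * (c.re * c.re) : ℝ) : ℂ) := by
      push_cast
      rw [hcr]
      exact h1
    have h3 : (0:ℝ) ≤ c.re - lam * (c.re * c.re) := by
      rwa [Complex.zero_le_real] at h2
    have h4 : lam * c.re ≤ 1 := by nlinarith
    calc lam = lam * c.re * (c.re)⁻¹ := by field_simp
      _ ≤ 1 * (c.re)⁻¹ := by
          apply mul_le_mul_of_nonneg_right h4 (by positivity)
      _ = (c.re)⁻¹ := one_mul _
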